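/- Let G be a finite group, S a Sylow p-subgroup, and P ≤ S a subgroup that is fully normalized in the fusion system F_S(G), i.e., |N_S(P)| ≥ |N_S(P')| for every subgroup P' ≤ S that is G-conjugate to P. Then the image Aut_S(P) of N_S(P) in Aut(P) is a Sylow p-subgroup of Aut_G(P) := N_G(P)/C_G(P). -/

import Mathlib

variable (G : Type) [Group G]

/-- `Aut_G(P) = N_G(P)/C_G(P)`, realized as the subgroup of automorphisms of
`P` (viewed inside its normalizer) induced by conjugation by elements of the
normalizer `N_G(P)`. -/
def autG (P : Subgroup G) : Subgroup (MulAut (P.subgroupOf (Subgroup.normalizer (P : Set G)))) :=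
  (MulAut.conjNormal (G := (Subgroup.normalizer (P : Set G))) (H := P.subgroupOf (Subgroup.normalizer (P : Set G)))).range

/-- For `S ≤ G`, the subgroup `Aut_S(P) ≤ Aut_G(P)` of automorphisms of `P`
induced by conjugation by elements of `N_S(P) = S ⊓ N_G(P)`. -/
def autSub (S P : Subgroup G) : Subgroup (MulAut (P.subgroupOf (Subgroup.normalizer (P : Set G)))) :=
  Subgroup.map (MulAut.conjNormal (G := (Subgroup.normalizer (P : Set G))) (H := P.subgroupOf (Subgroup.normalizer (P : Set G))))
    ((S ⊓ (Subgroup.normalizer (P : Set G))).subgroupOf (Subgroup.normalizer (P : Set G)))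

open Subgroup Pointwise in
/-- If `P ≤ S` is fully normalized, then `N_S(P) = S ⊓ N_G(P)`, viewed inside
`N_G(P)`, has index prime to `p` (i.e. it is a Sylow `p`-subgroup of `N_G(P)`). -/
theorem key_fn (p : ℕ) [Fact p.Prime] [Finite G]
    (S : Sylow p G) (P : Subgroup G) (hP : P ≤ (S : Subgroup G))
    (hfn : ∀ g : G, P.map (MulAut.conj g).toMonoidHom ≤ (S : Subgroup G) →
      Nat.card ((S : Subgroup G) ⊓ Subgroup.normalizer ((P.map (MulAut.conj g).toMonoidHom : Subgroup G) : Set G) : Subgroup G) ≤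
        Nat.card ((S : Subgroup G) ⊓ Subgroup.normalizer (P : Set G) : Subgroup G)) :
    ¬ p ∣ (((S : Subgroup G) ⊓ Subgroup.normalizer (P : Set G)).subgroupOf (Subgroup.normalizer (P : Set G))).index := by
  set N := Subgroup.normalizer (P : Set G) with hN
  set K := (S : Subgroup G) ⊓ N with hK
  have hK'p : IsPGroup p (K.subgroupOf N) :=
    (S.isPGroup'.to_inf_left).of_equiv (subgroupOfEquivOfLe inf_le_right).symm
  obtain ⟨T, hKT⟩ := hK'p.exists_le_sylow
  set T' := (T : Subgroup N).map N.subtype with hT'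
  obtain ⟨Q, hQ⟩ := (T.2.map N.subtype).exists_le_sylow
  obtain ⟨g, hg⟩ := MulAction.exists_smul_eq G Q S
  have hgQ : (Q : Subgroup G).map (MulAut.conj g).toMonoidHom = S := by
    rw [← hg]; rfl
  have hPT' : P ≤ T' := by
    intro x hx
    have hxN : x ∈ N := le_normalizer hx
    exact ⟨⟨x, hxN⟩, hKT (mem_subgroupOf.mpr ⟨hP hx, hxN⟩), rfl⟩
  set P' := P.map (MulAut.conj g).toMonoidHom with hP'
  have hT'map : T'.map (MulAut.conj g).toMonoidHom ≤ (S : Subgroup G) ⊓ Subgroup.normalizer (P' : Set G) := by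
    refine le_inf ((map_mono hQ).trans hgQ.le) ?_
    rw [hP', ← map_equiv_normalizer_eq P (MulAut.conj g)]
    exact map_mono (map_subtype_le T.1)
  have hP'S : P' ≤ (S : Subgroup G) := (map_mono hPT').trans (hT'map.trans inf_le_left)
  have hcard : Nat.card (T : Subgroup N) ≤ Nat.card (K.subgroupOf N) := by
    have e1 : Nat.card (T : Subgroup N) = Nat.card T' :=
      Nat.card_congr ((T : Subgroup N).equivMapOfInjective _ N.subtype_injective).toEquiv
    have e2 : Nat.card T' = Nat.card (T'.map (MulAut.conj g).toMonoidHom) :=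
      Nat.card_congr (T'.equivMapOfInjective _ (MulAut.conj g).injective).toEquiv
    have e3 : Nat.card (T'.map (MulAut.conj g).toMonoidHom) ≤
        Nat.card ((S : Subgroup G) ⊓ Subgroup.normalizer (P' : Set G) : Subgroup G) :=
      Subgroup.card_le_of_le hT'map
    have e4 : Nat.card (K.subgroupOf N) = Nat.card K :=
      Nat.card_congr (subgroupOfEquivOfLe inf_le_right).toEquiv
    rw [e1, e2, e4]
    exact e3.trans (hfn g hP'S)
  have hEq : K.subgroupOf N = T := Subgroup.eq_of_le_of_card_ge hKT hcard
  rw [hEq]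
  exact T.not_dvd_index

open Subgroup in
theorem subgroupOf_range_map {G H : Type} [Group G] [Group H] (f : G →* H) (K : Subgroup G) :
    (K.map f).subgroupOf f.range = K.map f.rangeRestrict := by
  ext x
  simp [mem_subgroupOf, mem_map, Subtype.ext_iff]

theorem stmt_14 (p : ℕ) [Fact p.Prime] [Finite G]
    (S : Sylow p G) (P : Subgroup G) (hP : P ≤ (S : Subgroup G))
    (hfn : ∀ g : G, P.map (MulAut.conj g).toMonoidHom ≤ (S : Subgroup G) →
      Nat.card ((S : Subgroup G) ⊓ Subgroup.normalizer ((P.map (MulAut.conj g).toMonoidHom : Subgroup G) : Set G) : Subgroup G) ≤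
        Nat.card ((S : Subgroup G) ⊓ Subgroup.normalizer (P : Set G) : Subgroup G)) :
    autSub G (S : Subgroup G) P ≤ autG G P ∧
    IsPGroup p (autSub G (S : Subgroup G) P) ∧
    ¬ p ∣ ((autSub G (S : Subgroup G) P).subgroupOf (autG G P)).index := by
  refine ⟨Subgroup.map_le_range _ _, ?_, ?_⟩
  · exact ((S.isPGroup'.to_inf_left).of_equiv
      (Subgroup.subgroupOfEquivOfLe inf_le_right).symm).map _
  · set f := MulAut.conjNormal (G := Subgroup.normalizer (P : Set G)) (H := P.subgroupOf (Subgroup.normalizer (P : Set G)))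
    have hrw : (autSub G (S : Subgroup G) P).subgroupOf (autG G P) =
        (((S : Subgroup G) ⊓ Subgroup.normalizer (P : Set G)).subgroupOf (Subgroup.normalizer (P : Set G))).map f.rangeRestrict :=
      subgroupOf_range_map f _
    rw [hrw]
    intro hdvd
    exact key_fn G p S P hP hfn (hdvd.trans
      (Subgroup.index_map_dvd _ f.rangeRestrict_surjective))
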